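/- Let X, Y be Polish spaces, E a Borel equivalence relation on X, and P ⊆ X × Y a Borel E-invariant set with Fσ sections. If there is an E-invariant Borel map x ↦ F_x assigning to each x a nonempty closed subset F_x of Y such that P_x is non-meager in F_x for all x ∈ X, then P admits a Borel E-invariant uniformization, i.e., a Borel function f : X → Y with (x, f(x)) ∈ P for all x and f(x) = f(x') whenever x E x'. -/

import Mathlib

open Set Metric Filter Topology

namespace Stmt0Aux

variable {Y : Type*} [MetricSpace Y]

/-- First index: a point of the countable dense family `u` whose small ball meets `C`;
we prefer `n` itself when possible. -/
noncomputable def idx0 (u : ℕ → Y) (C : Set Y) (n j : ℕ) : ℕ :=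
  sInf {m | (m = n ∨ ¬(C ∩ ball (u n) ((1/2 : ℝ)^j)).Nonempty) ∧
    (C ∩ ball (u m) ((1/2 : ℝ)^j)).Nonempty}

/-- Step function of the recursive approximation scheme. -/
noncomputable def idxStep (u : ℕ → Y) (C : Set Y) (j k p : ℕ) : ℕ :=
  sInf {m | dist (u m) (u p) < (1/2 : ℝ)^(j+k) + (1/2 : ℝ)^(j+k+1) ∧
    (C ∩ ball (u m) ((1/2 : ℝ)^(j+k+1))).Nonempty}

/-- The approximating sequence of indices. -/
noncomputable def idx (u : ℕ → Y) (C : Set Y) (n j : ℕ) : ℕ → ℕ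
  | 0 => idx0 u C n j
  | (k+1) => idxStep u C j k (idx u C n j k)

/-- The selected point: limit of the approximation scheme. -/
noncomputable def sel (u : ℕ → Y) (C : Set Y) (n j : ℕ) : Y :=
  haveI : Nonempty Y := ⟨u 0⟩
  limUnder atTop (fun k => u (idx u C n j k))

variable (u : ℕ → Y) (C : Set Y)

lemma set0_nonempty (hu : DenseRange u) (hC : C.Nonempty) (n j : ℕ) :
    {m | (m = n ∨ ¬(C ∩ ball (u n) ((1/2 : ℝ)^j)).Nonempty) ∧
      (C ∩ ball (u m) ((1/2 : ℝ)^j)).Nonempty}.Nonempty := by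
  by_cases h : (C ∩ ball (u n) ((1/2 : ℝ)^j)).Nonempty
  · exact ⟨n, Or.inl rfl, h⟩
  · obtain ⟨y, hy⟩ := hC
    obtain ⟨m, hm⟩ := hu.exists_dist_lt y (by positivity : (0:ℝ) < (1/2 : ℝ)^j)
    exact ⟨m, Or.inr h, ⟨y, hy, mem_ball.mpr hm⟩⟩

lemma stepset_nonempty (hu : DenseRange u) (n j k : ℕ)
    (ih : (C ∩ ball (u (idx u C n j k)) ((1/2 : ℝ)^(j+k))).Nonempty) :
    {m | dist (u m) (u (idx u C n j k)) < (1/2 : ℝ)^(j+k) + (1/2 : ℝ)^(j+k+1) ∧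
      (C ∩ ball (u m) ((1/2 : ℝ)^(j+k+1))).Nonempty}.Nonempty := by
  obtain ⟨y, hyC, hyb⟩ := ih
  obtain ⟨m, hm⟩ := hu.exists_dist_lt y (by positivity : (0:ℝ) < (1/2 : ℝ)^(j+k+1))
  refine ⟨m, ?_, ⟨y, hyC, mem_ball.mpr hm⟩⟩
  have h1 : dist (u m) y < (1/2 : ℝ)^(j+k+1) := by rw [dist_comm]; exact hm
  have h2 : dist y (u (idx u C n j k)) < (1/2 : ℝ)^(j+k) := mem_ball.mp hyb
  calc dist (u m) (u (idx u C n j k))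
      ≤ dist (u m) y + dist y (u (idx u C n j k)) := dist_triangle _ _ _
    _ < (1/2 : ℝ)^(j+k) + (1/2 : ℝ)^(j+k+1) := by linarith

lemma idx_inv (hu : DenseRange u) (hC : C.Nonempty) (n j : ℕ) :
    ∀ k, (C ∩ ball (u (idx u C n j k)) ((1/2 : ℝ)^(j+k))).Nonempty := by
  intro k
  induction k with
  | zero =>
    have h := Nat.sInf_mem (set0_nonempty u C hu hC n j)
    exact h.2
  | succ k ih =>
    have h := Nat.sInf_mem (stepset_nonempty u C hu n j k ih)
    exact h.2

lemma idx_dist (hu : DenseRange u) (hC : C.Nonempty) (n j k : ℕ) :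
    dist (u (idx u C n j (k+1))) (u (idx u C n j k)) ≤ 2*(1/2 : ℝ)^j * (1/2 : ℝ)^k := by
  have h := (Nat.sInf_mem (stepset_nonempty u C hu n j k (idx_inv u C hu hC n j k))).1
  have e1 : (1/2 : ℝ)^(j+k+1) = (1/2 : ℝ)^(j+k) * (1/2) := pow_succ _ _
  have e2 : (1/2 : ℝ)^(j+k) = (1/2 : ℝ)^j * (1/2 : ℝ)^k := pow_add _ _ _
  have hp : (0:ℝ) ≤ (1/2 : ℝ)^(j+k) := by positivity
  have hle : (1/2 : ℝ)^(j+k) + (1/2 : ℝ)^(j+k+1) ≤ 2*(1/2 : ℝ)^j * (1/2 : ℝ)^k := by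
    rw [e1]
    nlinarith [hp]
  exact le_trans (le_of_lt h) hle

lemma idx_cauchy (hu : DenseRange u) (hC : C.Nonempty) (n j : ℕ) :
    CauchySeq (fun k => u (idx u C n j k)) :=
  cauchySeq_of_le_geometric (1/2) (2*(1/2 : ℝ)^j) (by norm_num)
    (fun k => by rw [dist_comm]; exact idx_dist u C hu hC n j k)

lemma tendsto_sel [CompleteSpace Y] (hu : DenseRange u) (hC : C.Nonempty) (n j : ℕ) :
    Tendsto (fun k => u (idx u C n j k)) atTop (𝓝 (sel u C n j)) := by
  obtain ⟨a, ha⟩ := cauchySeq_tendsto_of_complete (idx_cauchy u C hu hC n j)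
  unfold sel
  rwa [ha.limUnder_eq]

lemma sel_mem [CompleteSpace Y] (hu : DenseRange u) (hC : C.Nonempty) (hCc : IsClosed C)
    (n j : ℕ) : sel u C n j ∈ C := by
  have hinv := idx_inv u C hu hC n j
  choose y hyC hyb using hinv
  have hgeo : Tendsto (fun k => (1/2 : ℝ)^(j+k)) atTop (𝓝 0) := by
    have h := (tendsto_pow_atTop_nhds_zero_of_lt_one (by norm_num : (0:ℝ) ≤ 1/2)
      (by norm_num : (1/2 : ℝ) < 1)).const_mul ((1/2 : ℝ)^j)
    simpa [pow_add] using h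
  have hd : Tendsto (fun k => dist (u (idx u C n j k)) (y k)) atTop (𝓝 0) := by
    refine squeeze_zero (fun k => dist_nonneg) (fun k => ?_) hgeo
    rw [dist_comm]
    exact (mem_ball.mp (hyb k)).le
  have hy_t : Tendsto y atTop (𝓝 (sel u C n j)) :=
    (tendsto_sel u C hu hC n j).congr_dist hd
  exact hCc.mem_of_tendsto hy_t (Eventually.of_forall hyC)

lemma idx_zero_eq (hu : DenseRange u) (hC : C.Nonempty) (n j : ℕ)
    (h : (C ∩ ball (u n) ((1/2 : ℝ)^j)).Nonempty) : idx u C n j 0 = n := by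
  have hmem := Nat.sInf_mem (set0_nonempty u C hu hC n j)
  rcases hmem.1 with h' | h'
  · exact h'
  · exact absurd h h'

lemma sel_close [CompleteSpace Y] (hu : DenseRange u) (hC : C.Nonempty) (n j : ℕ)
    (h : (C ∩ ball (u n) ((1/2 : ℝ)^j)).Nonempty) :
    dist (sel u C n j) (u n) ≤ 4*(1/2 : ℝ)^j := by
  have hb := dist_le_of_le_geometric_of_tendsto₀ (1/2) (2*(1/2 : ℝ)^j) (by norm_num)
      (fun k => by rw [dist_comm]; exact idx_dist u C hu hC n j k)
      (tendsto_sel u C hu hC n j)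
  rw [show idx u C n j 0 = n from idx_zero_eq u C hu hC n j h] at hb
  rw [dist_comm]
  calc dist (u n) (sel u C n j) ≤ (2*(1/2 : ℝ)^j)/(1 - 1/2) := hb
    _ = 4*(1/2 : ℝ)^j := by ring

lemma sel_density [CompleteSpace Y] (hu : DenseRange u) {y : Y} (hy : y ∈ C)
    {ε : ℝ} (hε : 0 < ε) : ∃ n j : ℕ, dist (sel u C n j) y < ε := by
  have hC : C.Nonempty := ⟨y, hy⟩
  obtain ⟨j, hj⟩ := exists_pow_lt_of_lt_one (show (0:ℝ) < ε/5 by linarith)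
    (show (1/2 : ℝ) < 1 by norm_num)
  obtain ⟨n, hn⟩ := hu.exists_dist_lt y (by positivity : (0:ℝ) < (1/2 : ℝ)^j)
  have hcond : (C ∩ ball (u n) ((1/2 : ℝ)^j)).Nonempty := ⟨y, hy, mem_ball.mpr hn⟩
  refine ⟨n, j, ?_⟩
  have h1 := sel_close u C hu hC n j hcond
  have h2 : dist (u n) y < (1/2 : ℝ)^j := by rw [dist_comm]; exact hn
  calc dist (sel u C n j) y ≤ dist (sel u C n j) (u n) + dist (u n) y := dist_triangle _ _ _
    _ < ε := by linarith

section Measurability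

variable {X : Type*} [MeasurableSpace X]

lemma measurable_sInf_set {p : ℕ → X → Prop} (hQ : ∀ m, MeasurableSet {x | p m x}) :
    Measurable (fun x => sInf {m | p m x}) := by
  apply measurable_to_countable'
  intro m0
  have key : (fun x => sInf {m | p m x}) ⁻¹' {m0} =
      ({x | p m0 x} ∩ ⋂ k, ⋂ _ : k < m0, {x | p k x}ᶜ) ∪
        ({x : X | m0 = 0} ∩ ⋂ k, {x | p k x}ᶜ) := by
    ext x
    simp only [mem_preimage, mem_singleton_iff, mem_union, mem_inter_iff, mem_iInter,
      mem_compl_iff, mem_setOf_eq]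
    constructor
    · intro h
      by_cases hne : {m | p m x}.Nonempty
      · left
        constructor
        · have := Nat.sInf_mem hne; rwa [h] at this
        · intro k hk
          exact Nat.notMem_of_lt_sInf (by rw [h]; exact hk)
      · right
        have hemp : {m | p m x} = ∅ := not_nonempty_iff_eq_empty.mp hne
        constructor
        · rw [← h, hemp]; exact Nat.sInf_empty
        · intro k hk
          exact hne ⟨k, hk⟩
    · rintro (⟨h0, hlt⟩ | ⟨h0, hall⟩)
      · refine le_antisymm (Nat.sInf_le h0) (le_csInf ⟨m0, h0⟩ ?_)
        intro b hb
        by_contra hcon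
        push_neg at hcon
        exact hlt b hcon hb
      · have hemp : {m | p m x} = ∅ := eq_empty_iff_forall_notMem.mpr hall
        rw [hemp, Nat.sInf_empty]
        exact h0.symm
  have : MeasurableSet ((fun x => sInf {m | p m x}) ⁻¹' {m0}) := by
    rw [key]
    refine MeasurableSet.union (MeasurableSet.inter (hQ m0) ?_) (MeasurableSet.inter ?_ ?_)
    · exact MeasurableSet.iInter fun k => MeasurableSet.iInter fun _ => (hQ k).compl
    · exact MeasurableSet.const _
    · exact MeasurableSet.iInter fun k => (hQ k).compl
  exact this

variable (F : X → Set Y)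

lemma measurable_idx
    (hF : ∀ U : Set Y, IsOpen U → MeasurableSet {x | (F x ∩ U).Nonempty})
    (n j : ℕ) : ∀ k, Measurable (fun x => idx u (F x) n j k) := by
  intro k
  induction k with
  | zero =>
    show Measurable fun x => idx0 u (F x) n j
    unfold idx0
    apply measurable_sInf_set
    intro m
    have hA := hF _ (isOpen_ball (x := u n) (ε := (1/2 : ℝ)^j))
    have hB := hF _ (isOpen_ball (x := u m) (ε := (1/2 : ℝ)^j))
    have e : {x : X | (m = n ∨ ¬(F x ∩ ball (u n) ((1/2 : ℝ)^j)).Nonempty) ∧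
        (F x ∩ ball (u m) ((1/2 : ℝ)^j)).Nonempty}
        = ({x : X | m = n} ∪ {x | (F x ∩ ball (u n) ((1/2 : ℝ)^j)).Nonempty}ᶜ) ∩
          {x | (F x ∩ ball (u m) ((1/2 : ℝ)^j)).Nonempty} := by
      ext x
      simp only [mem_inter_iff, mem_union, mem_compl_iff, mem_setOf_eq]
    rw [e]
    exact ((MeasurableSet.const _).union hA.compl).inter hB
  | succ k ih =>
    show Measurable fun x => idxStep u (F x) j k (idx u (F x) n j k)
    unfold idxStep
    apply measurable_sInf_set
    intro m
    have h1 : MeasurableSet {x : X |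
        dist (u m) (u (idx u (F x) n j k)) < (1/2 : ℝ)^(j+k) + (1/2 : ℝ)^(j+k+1)} := by
      have : {x : X | dist (u m) (u (idx u (F x) n j k)) < (1/2 : ℝ)^(j+k) + (1/2 : ℝ)^(j+k+1)}
          = (fun x => idx u (F x) n j k) ⁻¹'
            {q : ℕ | dist (u m) (u q) < (1/2 : ℝ)^(j+k) + (1/2 : ℝ)^(j+k+1)} := rfl
      rw [this]
      exact ih trivial
    have h2 := hF _ (isOpen_ball (x := u m) (ε := (1/2 : ℝ)^(j+k+1)))
    have e : {x : X | dist (u m) (u (idx u (F x) n j k)) < (1/2 : ℝ)^(j+k) + (1/2 : ℝ)^(j+k+1) ∧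
        (F x ∩ ball (u m) ((1/2 : ℝ)^(j+k+1))).Nonempty}
        = {x : X | dist (u m) (u (idx u (F x) n j k)) < (1/2 : ℝ)^(j+k) + (1/2 : ℝ)^(j+k+1)} ∩
          {x | (F x ∩ ball (u m) ((1/2 : ℝ)^(j+k+1))).Nonempty} := rfl
    rw [e]
    exact h1.inter h2

lemma measurable_sel [CompleteSpace Y] [MeasurableSpace Y] [BorelSpace Y]
    (hF : ∀ U : Set Y, IsOpen U → MeasurableSet {x | (F x ∩ U).Nonempty})
    (hu : DenseRange u) (hFne : ∀ x, (F x).Nonempty) (n j : ℕ) :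
    Measurable (fun x => sel u (F x) n j) := by
  apply measurable_of_tendsto_metrizable (f := fun k x => u (idx u (F x) n j k))
  · exact fun k => measurable_from_top.comp (measurable_idx u F hF n j k)
  · rw [tendsto_pi_nhds]
    exact fun x => tendsto_sel u (F x) hu (hFne x) n j

end Measurability

/-- The countable family of canonical selections, indexed by a single natural number. -/
noncomputable def gsel {X : Type*} (u : ℕ → Y) (F : X → Set Y) (c : ℕ) (x : X) : Y :=
  sel u (F x) (Nat.unpair c).1 (Nat.unpair c).2

end Stmt0Aux

open Stmt0Aux in
/-- If `P ⊆ X × Y` is a Borel `E`-invariant set with `Fσ` sections, and there is an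
`E`-invariant Borel assignment `x ↦ F x` of nonempty closed subsets of `Y` (Borel in the Effros
Borel structure) such that `P_x` is non-meager in `F x` for every `x`, then `P` admits a Borel
`E`-invariant uniformization. -/
theorem stmt0 {X Y : Type*}
    [TopologicalSpace X] [PolishSpace X] [MeasurableSpace X] [BorelSpace X]
    [TopologicalSpace Y] [PolishSpace Y] [MeasurableSpace Y] [BorelSpace Y]
    (E : X → X → Prop) (hE : Equivalence E)
    (hEborel : MeasurableSet {p : X × X | E p.1 p.2})
    (P : Set (X × Y)) (hPborel : MeasurableSet P)
    (hPinv : ∀ x x', E x x' → ∀ y, ((x, y) ∈ P ↔ (x', y) ∈ P))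
    (hPsectionsFsigma : ∀ x, ∃ F : ℕ → Set Y,
      (∀ n, IsClosed (F n)) ∧ {y | (x, y) ∈ P} = ⋃ n, F n)
    (F : X → Set Y)
    (hFclosed : ∀ x, IsClosed (F x)) (hFne : ∀ x, (F x).Nonempty)
    (hFinv : ∀ x x', E x x' → F x = F x')
    (hFborel : ∀ U : Set Y, IsOpen U → MeasurableSet {x | (F x ∩ U).Nonempty})
    (hnonmeager : ∀ x, ¬ IsMeagre {y : F x | (x, (y : Y)) ∈ P}) :
    ∃ f : X → Y, Measurable f ∧ (∀ x, (x, f x) ∈ P) ∧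
      ∀ x x', E x x' → f x = f x' := by
  classical
  obtain hX | hX := isEmpty_or_nonempty X
  · refine ⟨fun x => isEmptyElim x, ?_, fun x => isEmptyElim x, fun x _ _ => isEmptyElim x⟩
    intro t _
    rw [eq_empty_of_isEmpty ((fun x => isEmptyElim x : X → Y) ⁻¹' t)]
    exact MeasurableSet.empty
  · have hY : Nonempty Y := ⟨(hFne hX.some).choose⟩
    letI := TopologicalSpace.upgradeIsCompletelyMetrizable Y
    set u : ℕ → Y := TopologicalSpace.denseSeq Y with hu_def
    have hu : DenseRange u := TopologicalSpace.denseRange_denseSeq Y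
    -- every x admits some index c with (x, gsel u F c x) ∈ P
    have hgood : ∀ x, {c : ℕ | (x, gsel u F c x) ∈ P}.Nonempty := by
      intro x
      obtain ⟨Cm, hCmcl, hCme⟩ := hPsectionsFsigma x
      -- the pieces pulled back to the subtype F x
      have hsub : {y : F x | (x, (y : Y)) ∈ P}
          = ⋃ m, ((Subtype.val) ⁻¹' (Cm m) : Set (F x)) := by
        ext y
        have h := Set.ext_iff.mp hCme (y : Y)
        simpa using h
      have hex : ∃ m, ¬ IsMeagre ((Subtype.val) ⁻¹' (Cm m) : Set (F x)) := by
        by_contra hcon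
        push_neg at hcon
        exact hnonmeager x (by rw [hsub]; exact isMeagre_iUnion hcon)
      obtain ⟨m, hm⟩ := hex
      have hclosed : IsClosed ((Subtype.val) ⁻¹' (Cm m) : Set (F x)) :=
        (hCmcl m).preimage continuous_subtype_val
      have hint : (interior ((Subtype.val) ⁻¹' (Cm m) : Set (F x))).Nonempty := by
        rw [nonempty_iff_ne_empty]
        intro hemp
        exact hm (residual_of_dense_open hclosed.isOpen_compl
          (interior_eq_empty_iff_dense_compl.mp hemp))
      obtain ⟨z, hz⟩ := hint
      obtain ⟨V, hVsub, hVopen, hzV⟩ := mem_interior.mp hz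
      obtain ⟨U, hUopen, hUV⟩ := isOpen_induced_iff.mp hVopen
      have hzU : (z : Y) ∈ U := by
        have h : z ∈ Subtype.val ⁻¹' U := by rw [hUV]; exact hzV
        exact h
      obtain ⟨ε, hεpos, hball⟩ := Metric.isOpen_iff.mp hUopen _ hzU
      obtain ⟨n, j, hnj⟩ := sel_density u (F x) hu z.2 hεpos
      refine ⟨Nat.pair n j, ?_⟩
      have hselF : sel u (F x) n j ∈ F x :=
        sel_mem u (F x) hu (hFne x) (hFclosed x) n j
      have hselU : sel u (F x) n j ∈ U := hball (mem_ball.mpr hnj)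
      have hmemV : (⟨sel u (F x) n j, hselF⟩ : F x) ∈ V := by
        rw [← hUV]; exact hselU
      have hselC : sel u (F x) n j ∈ Cm m := hVsub hmemV
      have hselP : sel u (F x) n j ∈ {y | (x, y) ∈ P} := by
        rw [hCme]; exact mem_iUnion.mpr ⟨m, hselC⟩
      show (x, gsel u F (Nat.pair n j) x) ∈ P
      unfold gsel
      rw [Nat.unpair_pair]
      exact hselP
    -- measurability of the family of selections
    have hgmeas : ∀ c, Measurable (gsel u F c) := by
      intro c
      exact measurable_sel u F hFborel hu hFne (Nat.unpair c).1 (Nat.unpair c).2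
    have hPredMeas : ∀ c, MeasurableSet {x | (x, gsel u F c x) ∈ P} := by
      intro c
      exact (measurable_id.prodMk (hgmeas c)) hPborel
    -- the least good index
    set Nf : X → ℕ := fun x => sInf {c | (x, gsel u F c x) ∈ P} with hNf_def
    have hNmeas : Measurable Nf := measurable_sInf_set hPredMeas
    have hNmem : ∀ x, (x, gsel u F (Nf x) x) ∈ P := fun x => Nat.sInf_mem (hgood x)
    refine ⟨fun x => gsel u F (Nf x) x, ?_, hNmem, ?_⟩
    · intro t ht
      have key : (fun x => gsel u F (Nf x) x) ⁻¹' t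
          = ⋃ c, ({x | Nf x = c} ∩ (gsel u F c) ⁻¹' t) := by
        ext x
        simp only [mem_preimage, mem_iUnion, mem_inter_iff, mem_setOf_eq]
        constructor
        · intro h
          exact ⟨Nf x, rfl, h⟩
        · rintro ⟨c, hc, h⟩
          rw [hc]
          exact h
      rw [key]
      exact MeasurableSet.iUnion fun c =>
        (hNmeas (measurableSet_singleton c)).inter ((hgmeas c) ht)
    · intro x x' hxx'
      have hFF : F x = F x' := hFinv x x' hxx'
      have hgg : ∀ c, gsel u F c x = gsel u F c x' := by
        intro c
        unfold gsel
        rw [hFF]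
      have hset : {c : ℕ | (x, gsel u F c x) ∈ P} = {c : ℕ | (x', gsel u F c x') ∈ P} := by
        ext c
        simp only [mem_setOf_eq]
        rw [hgg c]
        exact hPinv x x' hxx' _
      have hNN : Nf x = Nf x' := by
        show sInf {c : ℕ | (x, gsel u F c x) ∈ P} = sInf {c : ℕ | (x', gsel u F c x') ∈ P}
        rw [hset]
      show gsel u F (Nf x) x = gsel u F (Nf x') x'
      rw [hNN, hgg (Nf x')]
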